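/- Mirror strengthened form of the first case of the discrete monotonicity rule: if ρ is nondecreasing on [a+1,b] and g(n)·Δg(n) > 0 for all n ∈ [a+1,b], then there exists ℓ ∈ [a,b] such that Δr(n) < 0 for all n with a+1 ≤ n ≤ ℓ and Δr(n) ≥ 0 for all n with ℓ+1 ≤ n ≤ b. -/

import Mathlib

/-- Mirror strengthened form of the first case of the discrete monotonicity rule. -/
theorem discrete_lhospital_monotone_rule_mirror_strengthened
    (a b : ℤ) (hab : a ≤ b) (f g : ℤ → ℝ)
    (hg : ∀ n : ℤ, a ≤ n → n ≤ b → g n ≠ 0)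
    (hgsign : ∀ n m : ℤ, a ≤ n → n ≤ b → a ≤ m → m ≤ b → 0 < g n * g m)
    (hΔg : ∀ n : ℤ, a + 1 ≤ n → n ≤ b → g n - g (n - 1) ≠ 0)
    (hΔgsign : ∀ n m : ℤ, a + 1 ≤ n → n ≤ b → a + 1 ≤ m → m ≤ b →
      0 < (g n - g (n - 1)) * (g m - g (m - 1)))
    (hρ : ∀ n : ℤ, a + 1 ≤ n → n + 1 ≤ b →
      (f n - f (n - 1)) / (g n - g (n - 1)) ≤ (f (n + 1) - f n) / (g (n + 1) - g n))
    (hgΔg : ∀ n : ℤ, a + 1 ≤ n → n ≤ b → 0 < g n * (g n - g (n - 1))) :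
    ∃ l : ℤ, a ≤ l ∧ l ≤ b ∧
      (∀ n : ℤ, a + 1 ≤ n → n ≤ l → f n / g n - f (n - 1) / g (n - 1) < 0) ∧
      (∀ n : ℤ, l + 1 ≤ n → n ≤ b → 0 ≤ f n / g n - f (n - 1) / g (n - 1)) := by
  classical
  set N : ℤ → ℝ := fun n => f n * g (n - 1) - f (n - 1) * g n with hN
  -- basic sign facts
  have hBn : ∀ n : ℤ, a + 1 ≤ n → n ≤ b →
      (g n ≠ 0 ∧ g (n - 1) ≠ 0 ∧ 0 < g n * g (n - 1) ∧ (g n - g (n - 1)) ≠ 0 ∧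
       0 < (g n - g (n - 1)) * g n ∧ 0 < (g n - g (n - 1)) * g (n - 1)) := by
    intro n h1 h2
    have ha1 : a ≤ n := by linarith
    have ha2 : a ≤ n - 1 := by linarith
    have hb2 : n - 1 ≤ b := by linarith
    have hA := hg n ha1 h2
    have hB := hg (n - 1) ha2 hb2
    have hAB := hgsign n (n - 1) ha1 h2 ha2 hb2
    have hD := hΔg n h1 h2
    have hDA : 0 < (g n - g (n - 1)) * g n := by
      have := hgΔg n h1 h2; linarith [this]
    have hDB : 0 < (g n - g (n - 1)) * g (n - 1) := by
      nlinarith [mul_pos hDA hAB, sq_nonneg (g n)]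
    exact ⟨hA, hB, hAB, hD, hDA, hDB⟩
  have hΔr : ∀ n : ℤ, a + 1 ≤ n → n ≤ b →
      (0 ≤ f n / g n - f (n - 1) / g (n - 1) ↔ 0 ≤ N n) := by
    intro n h1 h2
    obtain ⟨hA, hB, hAB, -, -, -⟩ := hBn n h1 h2
    have heq : f n / g n - f (n - 1) / g (n - 1) = N n / (g n * g (n - 1)) := by
      field_simp [hN]
      ring
    rw [heq, le_div_iff₀ hAB, zero_mul]
  have hρr : ∀ n : ℤ, a + 1 ≤ n → n ≤ b →
      (0 ≤ N n ↔ f n / g n ≤ (f n - f (n - 1)) / (g n - g (n - 1))) := by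
    intro n h1 h2
    obtain ⟨hA, hB, -, hD, hDA, -⟩ := hBn n h1 h2
    have heq : (f n - f (n - 1)) / (g n - g (n - 1)) - f n / g n
        = N n / ((g n - g (n - 1)) * g n) := by
      field_simp [hN]
      ring
    constructor
    · intro h
      have : 0 ≤ N n / ((g n - g (n - 1)) * g n) := div_nonneg h (le_of_lt hDA)
      linarith [heq ▸ this]
    · intro h
      have h0 : 0 ≤ N n / ((g n - g (n - 1)) * g n) := by rw [← heq]; linarith
      rw [le_div_iff₀ hDA, zero_mul] at h0
      exact h0
  have hρr' : ∀ n : ℤ, a + 1 ≤ n → n ≤ b →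
      (0 ≤ N n ↔ f (n - 1) / g (n - 1) ≤ (f n - f (n - 1)) / (g n - g (n - 1))) := by
    intro n h1 h2
    obtain ⟨hA, hB, -, hD, -, hDB⟩ := hBn n h1 h2
    have heq : (f n - f (n - 1)) / (g n - g (n - 1)) - f (n - 1) / g (n - 1)
        = N n / ((g n - g (n - 1)) * g (n - 1)) := by
      field_simp [hN]
      ring
    constructor
    · intro h
      have : 0 ≤ N n / ((g n - g (n - 1)) * g (n - 1)) := div_nonneg h (le_of_lt hDB)
      linarith [heq ▸ this]
    · intro h
      have h0 : 0 ≤ N n / ((g n - g (n - 1)) * g (n - 1)) := by rw [← heq]; linarith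
      rw [le_div_iff₀ hDB, zero_mul] at h0
      exact h0
  have hstep : ∀ n : ℤ, a + 1 ≤ n → n + 1 ≤ b → 0 ≤ N n → 0 ≤ N (n + 1) := by
    intro n h1 h2 h3
    have hnb : n ≤ b := by linarith
    have hr : f n / g n ≤ (f n - f (n - 1)) / (g n - g (n - 1)) := (hρr n h1 hnb).mp h3
    have hchain : f n / g n ≤ (f (n + 1) - f n) / (g (n + 1) - g n) :=
      le_trans hr (hρ n h1 h2)
    have := (hρr' (n + 1) (by linarith) h2)
    simp only [add_sub_cancel_right] at this
    exact this.mpr hchain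
  by_cases hE : ∃ n : ℤ, a + 1 ≤ n ∧ n ≤ b ∧ 0 ≤ N n
  · obtain ⟨n0, ⟨hn0a, hn0b, hn0N⟩, hmin⟩ :=
      Int.exists_least_of_bdd (P := fun n => a + 1 ≤ n ∧ n ≤ b ∧ 0 ≤ N n)
        ⟨a + 1, fun z hz => hz.1⟩ hE
    refine ⟨n0 - 1, by linarith, by linarith, ?_, ?_⟩
    · intro n h1 h2
      have hnb : n ≤ b := by linarith
      have hne : ¬ (0 ≤ N n) := by
        intro h
        have := hmin n ⟨h1, hnb, h⟩
        omega
      have := (hΔr n h1 hnb)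
      by_contra hc
      push_neg at hc
      exact hne (this.mp hc)
    · intro n h1 h2
      have h1' : n0 ≤ n := by linarith
      have key : ∀ m : ℤ, n0 ≤ m → m ≤ b → 0 ≤ N m := fun m hm =>
        Int.le_induction (motive := fun k _ => k ≤ b → 0 ≤ N k) (fun _ => hn0N)
          (fun m hm ih hmb => hstep m (by linarith) hmb (ih (by linarith))) m hm
      exact (hΔr n (by linarith) h2).mpr (key n h1' h2)
  · push_neg at hE
    refine ⟨b, hab, le_refl b, ?_, ?_⟩
    · intro n h1 h2
      have hne := hE n h1 h2
      have := (hΔr n h1 h2)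
      by_contra hc
      push_neg at hc
      exact absurd (this.mp hc) (not_le_of_gt hne)
    · intro n h1 h2
      exact absurd (le_trans h1 h2) (by omega)
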